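/- Let L ⊂ ℝⁿ be a set spanning ℝⁿ and ℓ : L → ℝ a function. Suppose that for every w ∈ ℚⁿ there exists a seminorm s_w on ℝⁿ such that s_w(v) = |ℓ(v) + w·v| for all v ∈ L. Then: (a) ℓ(t v) = t ℓ(v) whenever v and t v both lie in L (t ∈ ℝ); (b) ℓ(v + v') = ℓ(v) + ℓ(v') whenever v, v', v + v' all lie in L; and consequently there exists a linear map Λ : ℝⁿ → ℝ with Λ|_L = ℓ. -/

import Mathlib

open MeasureTheory Filter Set Metric
open scoped ENNReal NNReal Topology RealInnerProductSpace

noncomputable section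

abbrev Euc (n : ℕ) : Type := EuclideanSpace ℝ (Fin n)

/-- The pointwise Lipschitz constant of `g` at `x`, restricted to the set `s`. -/
def lipWithin {X Y : Type*} [MetricSpace X] [MetricSpace Y]
    (g : X → Y) (s : Set X) (x : X) : ℝ :=
  Filter.limsup (fun y => dist (g y) (g x) / dist y x) (𝓝[s \ {x}] x)

/-- `p : ℝⁿ → ℝ` is (the function of) a seminorm. -/
def IsSeminormFn {n : ℕ} (p : Euc n → ℝ) : Prop :=
  ∃ s : Seminorm ℝ (Euc n), ∀ v, p v = s v

/-- `f : A ⊂ X → Y` admits a metric differential with respect to the chart `(U, φ)`. -/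
def HasMetricDiff {X Y : Type*} [MetricSpace X] [MeasurableSpace X] [MetricSpace Y] {n : ℕ}
    (μ : Measure X) (U : Set X) (φ : X → Euc n) (A : Set X) (f : X → Y) : Prop :=
  ∃ md : X → Euc n → ℝ,
    (∀ x ∈ A ∩ U, IsSeminormFn (md x)) ∧
    (∀ v : Euc n, Measurable fun x => md x v) ∧
    ∀ᵐ x ∂μ.restrict (A ∩ U),
      Tendsto (fun y => |dist (f y) (f x) - md x (φ y - φ x)| / dist y x)
        (𝓝[A \ {x}] x) (𝓝 0)

/-- `(U, φ)` is an `n`-dimensional chart. -/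
def IsChart {X : Type*} [MetricSpace X] [MeasurableSpace X] {n : ℕ}
    (μ : Measure X) (U : Set X) (φ : X → Euc n) : Prop :=
  MeasurableSet U ∧ 0 < μ U ∧ ∃ K : ℝ≥0, LipschitzWith K φ

/-- Condition (*): all directional slopes of `φ` are positive a.e. on `U`. -/
def ChartStar {X : Type*} [MetricSpace X] [MeasurableSpace X] {n : ℕ}
    (μ : Measure X) (U : Set X) (φ : X → Euc n) : Prop :=
  ∀ v : Euc n, ‖v‖ = 1 →
    ∀ᵐ x ∂μ.restrict U, 0 < lipWithin (fun y => (inner ℝ v (φ y) : ℝ)) U x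

/-- `f` is `L`-bi-Lipschitz on `s`. -/
def BiLipschitzOn {X Y : Type*} [MetricSpace X] [MetricSpace Y]
    (L : ℝ) (f : X → Y) (s : Set X) : Prop :=
  ∀ x ∈ s, ∀ y ∈ s, L⁻¹ * dist x y ≤ dist (f x) (f y) ∧ dist (f x) (f y) ≤ L * dist x y

/-- `(X, d, μ)` is `n`-rectifiable. -/
def IsRectifiable (n : ℕ) (X : Type*) [MetricSpace X] [MeasurableSpace X] [BorelSpace X]
    (μ : Measure X) : Prop :=
  μ ≪ μH[(n : ℝ)] ∧
  ∃ (E : ℕ → Set (Euc n)) (ψ : ℕ → Euc n → X) (K : ℕ → ℝ≥0),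
    (∀ i, MeasurableSet (E i)) ∧ (∀ i, LipschitzOnWith (K i) (ψ i) (E i)) ∧
    μ ((⋃ i, ψ i '' E i)ᶜ) = 0

/-- `(U, φ)` is a weak Cheeger chart: every Lipschitz function `X → ℝ` has a unique
linear differential at `μ`-a.e. point of `U`, with the limit taken within `U`. -/
def IsWeakCheegerChart {X : Type*} [MetricSpace X] [MeasurableSpace X] {n : ℕ}
    (μ : Measure X) (U : Set X) (φ : X → Euc n) : Prop :=
  IsChart μ U φ ∧
  ∀ (f : X → ℝ) (K : ℝ≥0), LipschitzWith K f →
    ∀ᵐ x ∂μ.restrict U, ∃! L : Euc n →ₗ[ℝ] ℝ,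
      Tendsto (fun y => |f y - f x - L (φ y - φ x)| / dist y x) (𝓝[U \ {x}] x) (𝓝 0)

/-- `(U, φ)` is a Cheeger chart: as a weak Cheeger chart, but with the limit
taken in all of `X`. -/
def IsCheegerChart {X : Type*} [MetricSpace X] [MeasurableSpace X] {n : ℕ}
    (μ : Measure X) (U : Set X) (φ : X → Euc n) : Prop :=
  IsChart μ U φ ∧
  ∀ (f : X → ℝ) (K : ℝ≥0), LipschitzWith K f →
    ∀ᵐ x ∂μ.restrict U, ∃! L : Euc n →ₗ[ℝ] ℝ,
      Tendsto (fun y => |f y - f x - L (φ y - φ x)| / dist y x) (𝓝[≠] x) (𝓝 0)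


lemma inner_abs_bound {n : ℕ} (x y : Euc n) (δ : ℝ) (h : ∀ k, |x k| ≤ δ) :
    |(inner ℝ x y : ℝ)| ≤ δ * ∑ k, |y k| := by
  rw [PiLp.inner_apply]; simp only [RCLike.inner_apply']
  calc |∑ k, (starRingEnd ℝ) (x k) * y k| ≤ ∑ k, |(starRingEnd ℝ) (x k) * y k| :=
        Finset.abs_sum_le_sum_abs _ _
    _ ≤ ∑ k, δ * |y k| := by
        refine Finset.sum_le_sum fun k _ => ?_
        simp only [abs_mul, starRingEnd_apply, star_trivial]
        exact mul_le_mul_of_nonneg_right (h k) (abs_nonneg _)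
    _ = δ * ∑ k, |y k| := by rw [Finset.mul_sum]

lemma seminorm_sum_le {n : ℕ} (s : Seminorm ℝ (Euc n)) {ι : Type*} (t : Finset ι)
    (g : ι → Euc n) : s (∑ i ∈ t, g i) ≤ ∑ i ∈ t, s (g i) := by
  classical
  induction t using Finset.induction with
  | empty => simp
  | insert _ _ hne ih =>
    rw [Finset.sum_insert hne, Finset.sum_insert hne]
    exact le_trans (map_add_le_add s _ _) (by linarith)

/-- **Lemma (linear algebra core of Proposition 3.1):** if `ℓ : L → ℝ` is a function on a
spanning set `L ⊆ ℝⁿ` such that for every rational vector `w` the map `v ↦ |ℓ(v) + w·v|`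
is the restriction to `L` of a seminorm, then `ℓ` is homogeneous and additive on `L` and
extends to a linear map `ℝⁿ → ℝ`. -/
theorem linear_extension_of_seminorm_compatible {n : ℕ}
    (L : Set (Euc n)) (hspan : Submodule.span ℝ L = ⊤) (ℓ : Euc n → ℝ)
    (hsem : ∀ w : Fin n → ℚ, ∃ s : Seminorm ℝ (Euc n),
      ∀ v ∈ L, s v = |ℓ v + (inner ℝ ((WithLp.equiv 2 (Fin n → ℝ)).symm fun i => (w i : ℝ)) v : ℝ)|) :
    (∀ (t : ℝ) (v : Euc n), v ∈ L → t • v ∈ L → ℓ (t • v) = t * ℓ v) ∧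
    (∀ v v' : Euc n, v ∈ L → v' ∈ L → v + v' ∈ L → ℓ (v + v') = ℓ v + ℓ v') ∧
    ∃ Λ : Euc n →ₗ[ℝ] ℝ, ∀ v ∈ L, Λ v = ℓ v := by
  classical
  obtain ⟨sB, hsubL, hspanB, hli⟩ := exists_linearIndependent ℝ L
  have hfin : sB.Finite := hli.setFinite
  haveI : Fintype sB := hfin.fintype
  let b : Module.Basis sB ℝ (Euc n) := Module.Basis.mk hli
    (by rw [Subtype.range_coe, hspanB, hspan])
  let f : Euc n →ₗ[ℝ] ℝ := b.constr ℝ (fun i => ℓ i)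
  have hfb : ∀ i : sB, f (b i) = ℓ i := fun i => b.constr_basis ℝ _ i
  let w₀ : Euc n := (InnerProductSpace.toDual ℝ (Euc n)).symm
    (-(LinearMap.toContinuousLinearMap f))
  have hw₀ : ∀ v : Euc n, (inner ℝ w₀ v : ℝ) = -f v := by
    intro v
    rw [show (inner ℝ w₀ v : ℝ) = (-(LinearMap.toContinuousLinearMap f)) v from
      InnerProductSpace.toDual_symm_apply]
    simp
  have key : ∀ v ∈ L, ℓ v = f v := by
    intro v hv
    set A : ℝ := |ℓ v + (inner ℝ w₀ v : ℝ)| with hA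
    set C : ℝ := (∑ i : sB, |b.repr v i| * ∑ k, |(b i : Euc n) k|) + ∑ k, |v k| with hC
    have hC0 : 0 ≤ C := by
      apply add_nonneg
      · exact Finset.sum_nonneg fun i _ => mul_nonneg (abs_nonneg _)
          (Finset.sum_nonneg fun k _ => abs_nonneg _)
      · exact Finset.sum_nonneg fun k _ => abs_nonneg _
    have habs : ∀ δ : ℝ, 0 < δ → A ≤ δ * C := by
      intro δ hδ
      choose q hq using fun k => exists_rat_near (w₀ k) hδ
      set W : Euc n := (WithLp.equiv 2 (Fin n → ℝ)).symm (fun k => (q k : ℝ)) with hW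
      have hWk : ∀ k, |(W - w₀) k| ≤ δ := by
        intro k
        have : (W - w₀) k = (q k : ℝ) - w₀ k := by
          simp [hW, WithLp.equiv_symm_apply, PiLp.toLp_apply]
        rw [this, abs_sub_comm]
        exact le_of_lt (hq k)
      obtain ⟨s, hs⟩ := hsem q
      have hsbi : ∀ i : sB, s (b i) ≤ δ * ∑ k, |(b i : Euc n) k| := by
        intro i
        have hmem : (b i : Euc n) ∈ L := by
          have : (b i : Euc n) = (i : Euc n) := by simp [b]
          rw [this]; exact hsubL i.2
        rw [hs _ hmem]
        have h1 : ℓ (b i) + (inner ℝ W (b i) : ℝ) = (inner ℝ (W - w₀) (b i) : ℝ) := by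
          have h2 : (inner ℝ w₀ (b i : Euc n) : ℝ) = -ℓ (b i) := by
            rw [hw₀]
            have : (b i : Euc n) = (i : Euc n) := by simp [b]
            rw [this]; rw [show f (i : Euc n) = ℓ i by rw [← hfb i]; congr 1; simp [b]]
          rw [inner_sub_left, h2]; ring
        rw [h1]
        exact inner_abs_bound _ _ δ hWk
      have hv_eq : v = ∑ i : sB, b.repr v i • b i := (b.sum_repr v).symm
      have hsv : s v ≤ δ * ∑ i : sB, |b.repr v i| * ∑ k, |(b i : Euc n) k| := by
        calc s v = s (∑ i : sB, b.repr v i • b i) := by rw [← hv_eq]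
          _ ≤ ∑ i : sB, s (b.repr v i • b i) := seminorm_sum_le s _ _
          _ = ∑ i : sB, |b.repr v i| * s (b i) := by
              refine Finset.sum_congr rfl fun i _ => ?_
              rw [map_smul_eq_mul]; simp [Real.norm_eq_abs]
          _ ≤ ∑ i : sB, |b.repr v i| * (δ * ∑ k, |(b i : Euc n) k|) :=
              Finset.sum_le_sum fun i _ =>
                mul_le_mul_of_nonneg_left (hsbi i) (abs_nonneg _)
          _ = δ * ∑ i : sB, |b.repr v i| * ∑ k, |(b i : Euc n) k| := by
              rw [Finset.mul_sum]; exact Finset.sum_congr rfl fun i _ => by ring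
      have hA1 : A ≤ |ℓ v + (inner ℝ W v : ℝ)| + |(inner ℝ (w₀ - W) v : ℝ)| := by
        have : ℓ v + (inner ℝ w₀ v : ℝ) =
            (ℓ v + (inner ℝ W v : ℝ)) + (inner ℝ (w₀ - W) v : ℝ) := by
          rw [inner_sub_left]; ring
        rw [hA, this]; exact abs_add_le _ _
      have hA2 : |(inner ℝ (w₀ - W) v : ℝ)| ≤ δ * ∑ k, |v k| := by
        apply inner_abs_bound
        intro k
        rw [show (w₀ - W) k = -((W - w₀) k) by simp, abs_neg]
        exact hWk k
      calc A ≤ |ℓ v + (inner ℝ W v : ℝ)| + |(inner ℝ (w₀ - W) v : ℝ)| := hA1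
        _ = s v + |(inner ℝ (w₀ - W) v : ℝ)| := by rw [hs v hv]
        _ ≤ δ * (∑ i : sB, |b.repr v i| * ∑ k, |(b i : Euc n) k|) + δ * ∑ k, |v k| :=
            add_le_add hsv hA2
        _ = δ * C := by rw [hC]; ring
    have hA0 : A ≤ 0 := by
      by_contra h
      push_neg at h
      have := habs (A / (2 * (C + 1))) (by positivity)
      have h2 : A / (2 * (C + 1)) * C < A := by
        rw [div_mul_eq_mul_div, div_lt_iff₀ (by positivity)]
        nlinarith
      linarith
    have : ℓ v + (inner ℝ w₀ v : ℝ) = 0 := abs_eq_zero.mp (le_antisymm hA0 (abs_nonneg _))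
    rw [hw₀] at this; linarith
  refine ⟨?_, ?_, ⟨f, fun v hv => (key v hv).symm⟩⟩
  · intro t v hv htv
    rw [key _ htv, key _ hv, f.map_smul]; simp
  · intro v v' hv hv' hvv'
    rw [key _ hvv', key _ hv, key _ hv', map_add]


end
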